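/- Compatibility implies well-branchedness: if Π ⊢ G1 : ⟨φ1,Λ1⟩ and Π ⊢ G2 : ⟨φ2,Λ2⟩ are derivable for ground g-choreographies G1, G2 and compch(φ1,φ2,Π) holds, then ⟦G1⟧ and ⟦G2⟧ are well-branched (there is a unique active participant, all others are passive), and consequently ⟦G1+G2⟧ = ⟦G1⟧+⟦G2⟧ ≠ ⊥. -/

import Mathlib

open scoped Classical

namespace Choreo

/-! ## Labels -/

/-- Communication labels: output `A B!m` and input `A B?m`. -/
inductive Label (P M : Type) where
  | out : P → P → M → Label P M
  | inp : P → P → M → Label P M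

variable {P M : Type}

/-- The subject of a label: the sender of an output, the receiver of an input. -/
def Label.sbj : Label P M → P
  | .out a _ _ => a
  | .inp _ b _ => b

/-- The set `L^!` of output labels (sender and receiver distinct). -/
def Lout : Set (Label P M) := {l | ∃ a b m, a ≠ b ∧ l = .out a b m}

/-- The set `L^?` of input labels (sender and receiver distinct). -/
def Lin : Set (Label P M) := {l | ∃ a b m, a ≠ b ∧ l = .inp a b m}

/-- `L̂(A)`: the labels in `L` whose subject is `A`. -/
def hat (L : Set (Label P M)) (A : P) : Set (Label P M) := {l ∈ L | l.sbj = A}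

/-- `sbj(L)`: the set of subjects of the labels in `L`. -/
def sbjSet (L : Set (Label P M)) : Set P := Label.sbj '' L

/-- `L − Π`: the labels in `L` whose subject is not in `Π`. -/
def lminus (L : Set (Label P M)) (Γ : Set P) : Set (Label P M) := {l ∈ L | l.sbj ∉ Γ}

/-! ## Labelled event structures (events drawn from ℕ) -/

/-- Data of a labelled (prime) event structure over events drawn from `ℕ`. -/
structure ES (P M : Type) where
  ev : Set ℕ
  le : ℕ → ℕ → Prop
  conf : ℕ → ℕ → Prop
  lbl : ℕ → Label P M

namespace ES

variable (E : ES P M)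

/-- Configurations: downward-closed conflict-free sets of events. -/
def Config (x : Set ℕ) : Prop :=
  x ⊆ E.ev ∧ (∀ e ∈ x, ∀ f ∈ E.ev, E.le f e → f ∈ x) ∧
    ∀ e ∈ x, ∀ f ∈ x, ¬ E.conf e f

/-- `MaxC E`: the ⊆-maximal configurations of `E`. -/
def MaxC : Set (Set ℕ) := {x | E.Config x ∧ ∀ y, E.Config y → x ⊆ y → y = x}

/-- Minimal events of `s ⊆ E.ev` with respect to `E.le`. -/
def minIn (s : Set ℕ) : Set ℕ := {e ∈ s | ∀ f ∈ s, E.le f e → f = e}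

/-- Maximal events of `s ⊆ E.ev` with respect to `E.le`. -/
def maxIn (s : Set ℕ) : Set ℕ := {e ∈ s | ∀ f ∈ s, E.le e f → f = e}

def minEv : Set ℕ := E.minIn E.ev
def maxEv : Set ℕ := E.maxIn E.ev

/-- Labels of the minimal events of `E`. -/
def minLbl : Set (Label P M) := E.lbl '' E.minEv

/-- Labels of the maximal events of `E`. -/
def maxLbl : Set (Label P M) := E.lbl '' E.maxEv

/-- All labels occurring in `E`. -/
def lblSet : Set (Label P M) := E.lbl '' E.ev

/-- The projection `E↾A`: the restriction of `E` to the events whose label has subject `A`. -/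
def proj (A : P) : ES P M where
  ev := {e ∈ E.ev | (E.lbl e).sbj = A}
  le u v := E.le u v ∧ (u ∈ E.ev ∧ (E.lbl u).sbj = A) ∧ (v ∈ E.ev ∧ (E.lbl v).sbj = A)
  conf u v := E.conf u v ∧ (u ∈ E.ev ∧ (E.lbl u).sbj = A) ∧ (v ∈ E.ev ∧ (E.lbl v).sbj = A)
  lbl := E.lbl

/-- The projection `x↾A` of a configuration (as a set of events of `E`). -/
def projC (x : Set ℕ) (A : P) : Set ℕ := {e ∈ x | (E.lbl e).sbj = A}

end ES

/-! ## Constructions on event structures -/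

/-- Tag for the events of a left component. -/
def tagL (e : ℕ) : ℕ := Nat.pair 0 e
/-- Tag for the events of a right component. -/
def tagR (e : ℕ) : ℕ := Nat.pair 1 e
/-- Tag for the events of the copy of the second component indexed by (the code of) a
maximal configuration of the first one. -/
def tagC (k e : ℕ) : ℕ := Nat.pair 1 (Nat.pair k e)

/-- A code (injective on finite sets) of sets of naturals. -/
noncomputable def encSet (x : Set ℕ) : ℕ :=
  if h : x.Finite then h.toFinset.sum (fun n => 2 ^ n) else 0

/-- The empty event structure `ε`. -/
noncomputable def esEmpty [Nonempty P] [Nonempty M] : ES P M where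
  ev := ∅
  le _ _ := False
  conf _ _ := False
  lbl _ := Label.out Classical.ofNonempty Classical.ofNonempty Classical.ofNonempty

/-- `⟦A→B:m⟧`: two ordered events labelled `A B!m < A B?m`. -/
def esAct (a b : P) (m : M) : ES P M where
  ev := {0, 1}
  le u v := (u = 0 ∧ v = 0) ∨ (u = 0 ∧ v = 1) ∨ (u = 1 ∧ v = 1)
  conf _ _ := False
  lbl e := if e = 0 then Label.out a b m else Label.inp a b m

/-- Tensor product `E1 ⊗ E2` (componentwise disjoint union). -/
def esTensor (E1 E2 : ES P M) : ES P M where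
  ev := (tagL '' E1.ev) ∪ (tagR '' E2.ev)
  le u v := (∃ e ∈ E1.ev, ∃ f ∈ E1.ev, E1.le e f ∧ u = tagL e ∧ v = tagL f) ∨
            (∃ e ∈ E2.ev, ∃ f ∈ E2.ev, E2.le e f ∧ u = tagR e ∧ v = tagR f)
  conf u v := (∃ e ∈ E1.ev, ∃ f ∈ E1.ev, E1.conf e f ∧ u = tagL e ∧ v = tagL f) ∨
              (∃ e ∈ E2.ev, ∃ f ∈ E2.ev, E2.conf e f ∧ u = tagR e ∧ v = tagR f)
  lbl u := if (Nat.unpair u).1 = 0 then E1.lbl (Nat.unpair u).2 else E2.lbl (Nat.unpair u).2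

/-- Sum `E1 + E2`: disjoint union with all cross pairs of events in conflict. -/
def esSum (E1 E2 : ES P M) : ES P M :=
  { esTensor E1 E2 with
    conf := fun u v => (esTensor E1 E2).conf u v ∨
      (∃ e ∈ E1.ev, ∃ f ∈ E2.ev, (u = tagL e ∧ v = tagR f) ∨ (u = tagR f ∧ v = tagL e)) }

/-- Sequential composition: appends to each maximal configuration `x` of `E1` a disjoint
copy of `E2`, ordering an event of `x` below an event of the copy whenever their labels
have the same subject. -/
noncomputable def esSeq (E1 E2 : ES P M) : ES P M where
  ev := (tagL '' E1.ev) ∪ {u | ∃ x ∈ E1.MaxC, ∃ e ∈ E2.ev, u = tagC (encSet x) e}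
  le u v :=
    (∃ e ∈ E1.ev, ∃ f ∈ E1.ev, E1.le e f ∧ u = tagL e ∧ v = tagL f) ∨
    (∃ x ∈ E1.MaxC, ∃ e ∈ E2.ev, ∃ f ∈ E2.ev, E2.le e f ∧
       u = tagC (encSet x) e ∧ v = tagC (encSet x) f) ∨
    (∃ x ∈ E1.MaxC, ∃ e ∈ x, ∃ f ∈ E2.ev, (E1.lbl e).sbj = (E2.lbl f).sbj ∧
       u = tagL e ∧ v = tagC (encSet x) f)
  conf u v :=
    (∃ e ∈ E1.ev, ∃ f ∈ E1.ev, E1.conf e f ∧ u = tagL e ∧ v = tagL f) ∨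
    (∃ x ∈ E1.MaxC, ∃ e ∈ E2.ev, ∃ f ∈ E2.ev, E2.conf e f ∧
       u = tagC (encSet x) e ∧ v = tagC (encSet x) f) ∨
    (∃ x ∈ E1.MaxC, ∃ x' ∈ E1.MaxC, x ≠ x' ∧ ∃ e ∈ E2.ev, ∃ f ∈ E2.ev,
       u = tagC (encSet x) e ∧ v = tagC (encSet x') f) ∨
    (∃ x ∈ E1.MaxC, ∃ e ∈ E1.ev, (∃ e' ∈ x, E1.conf e e') ∧ ∃ f ∈ E2.ev,
       ((u = tagL e ∧ v = tagC (encSet x) f) ∨ (u = tagC (encSet x) f ∧ v = tagL e)))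
  lbl u := if (Nat.unpair u).1 = 0 then E1.lbl (Nat.unpair u).2
           else E2.lbl (Nat.unpair (Nat.unpair u).2).2

/-! ## Well-branchedness -/

/-- Labels of the minimal events of the projection `E↾A`. -/
def minLblP (E : ES P M) (A : P) : Set (Label P M) := (E.proj A).minLbl

/-- `A` is active for the branches `E1`, `E2`. -/
def active (E1 E2 : ES P M) (A : P) : Prop :=
  minLblP E1 A ≠ ∅ ∧ minLblP E2 A ≠ ∅ ∧
  Disjoint (minLblP E1 A) (minLblP E2 A) ∧
  minLblP E1 A ∪ minLblP E2 A ⊆ Lout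

/-- `B` is passive for the branches `E1`, `E2`. -/
def passive (E1 E2 : ES P M) (B : P) : Prop :=
  Disjoint (minLblP E1 B) (minLblP E2 B) ∧
  minLblP E1 B ∪ minLblP E2 B ⊆ Lin ∧
  (minLblP E1 B = ∅ ↔ minLblP E2 B = ∅)

/-- Well-branchedness: a unique active participant, all other participants passive. -/
def wb (E1 E2 : ES P M) : Prop :=
  ∃ A, active E1 E2 A ∧ (∀ A', active E1 E2 A' → A' = A) ∧
    ∀ B, B ≠ A → passive E1 E2 B

/-! ## Ground g-choreographies and their semantics -/

/-- Ground g-choreographies: `G ::= 0 | A→B:m | G;G | G|G | G+G`. -/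
inductive GC (P M : Type) where
  | nil : GC P M
  | act : P → P → M → GC P M
  | seq : GC P M → GC P M → GC P M
  | par : GC P M → GC P M → GC P M
  | cho : GC P M → GC P M → GC P M

/-- `P(G)`: the participants occurring in `G`. -/
def parts : GC P M → Set P
  | .nil => ∅
  | .act a b _ => {a, b}
  | .seq g1 g2 => parts g1 ∪ parts g2
  | .par g1 g2 => parts g1 ∪ parts g2
  | .cho g1 g2 => parts g1 ∪ parts g2

/-- The semantics `⟦G⟧`: a labelled event structure, or `none` (i.e. `⊥`) when a side
condition fails (the grammar requires `A ≠ B` in interactions; parallel requires disjoint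
label sets; choice requires well-branchedness). -/
noncomputable def gsem [Nonempty P] [Nonempty M] : GC P M → Option (ES P M)
  | .nil => some esEmpty
  | .act a b m => if a = b then none else some (esAct a b m)
  | .seq g1 g2 =>
      match gsem g1, gsem g2 with
      | some E1, some E2 => some (esSeq E1 E2)
      | _, _ => none
  | .par g1 g2 =>
      match gsem g1, gsem g2 with
      | some E1, some E2 =>
          if Disjoint E1.lblSet E2.lblSet then some (esTensor E1 E2) else none
      | _, _ => none
  | .cho g1 g2 =>
      match gsem g1, gsem g2 with
      | some E1, some E2 => if wb E1 E2 then some (esSum E1 E2) else none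
      | _, _ => none

/-! ## The typing system -/

/-- Output uniform sets of labels. -/
def outUniform (U V : Set (Label P M)) : Prop := Disjoint U V ∧ U ∪ V ⊆ Lout

/-- Input uniform sets of labels. -/
def inUniform (U V : Set (Label P M)) : Prop := Disjoint U V ∧ U ∪ V ⊆ Lin

/-- The compatibility condition `compch(φ1,φ2,Π)` of rule t-ch. -/
def compch (φ1 φ2 : Set (Label P M)) (Γ : Set P) : Prop :=
  ∃ A ∈ Γ,
    (outUniform (hat φ1 A) (hat φ2 A) ∧ hat φ1 A ≠ ∅ ∧ hat φ2 A ≠ ∅) ∧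
    (∀ A' ∈ Γ, (outUniform (hat φ1 A') (hat φ2 A') ∧ hat φ1 A' ≠ ∅ ∧ hat φ2 A' ≠ ∅) →
        A' = A) ∧
    ∀ B ∈ Γ, B ≠ A →
      inUniform (hat φ1 B) (hat φ2 B) ∧ (hat φ1 B = ∅ ↔ hat φ2 B = ∅)

/-- The typing judgement `Π ⊢ G : ⟨φ,Λ⟩`. -/
inductive Typing : Set P → GC P M → Set (Label P M) → Set (Label P M) → Prop where
  | temp : Typing ∅ GC.nil ∅ ∅
  | tint {a b : P} {m : M} (hab : a ≠ b) :
      Typing {a, b} (GC.act a b m)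
        {Label.out a b m, Label.inp a b m} {Label.out a b m, Label.inp a b m}
  | tseq {Γ1 Γ2 : Set P} {g1 g2 : GC P M} {φ1 φ2 Λ1 Λ2 : Set (Label P M)} :
      Typing Γ1 g1 φ1 Λ1 → Typing Γ2 g2 φ2 Λ2 →
      Typing (Γ1 ∪ Γ2) (GC.seq g1 g2) (φ1 ∪ lminus φ2 Γ1) (Λ2 ∪ lminus Λ1 Γ2)
  | tpar {Γ1 Γ2 : Set P} {g1 g2 : GC P M} {φ1 φ2 Λ1 Λ2 : Set (Label P M)} :
      Typing Γ1 g1 φ1 Λ1 → Typing Γ2 g2 φ2 Λ2 → Γ1 ∩ Γ2 = ∅ →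
      Typing (Γ1 ∪ Γ2) (GC.par g1 g2) (φ1 ∪ φ2) (Λ1 ∪ Λ2)
  | tch {Γ : Set P} {g1 g2 : GC P M} {φ1 φ2 Λ1 Λ2 : Set (Label P M)} :
      Typing Γ g1 φ1 Λ1 → Typing Γ g2 φ2 Λ2 → compch φ1 φ2 Γ →
      Typing Γ (GC.cho g1 g2) (φ1 ∪ φ2) (Λ1 ∪ Λ2)


/-! ## One-hole contexts and their typing (hole axiom `Γh ⊢ [·] : ⟨φh,Λh⟩`) -/

/-- g-choreography contexts with a single hole. -/
inductive Ctx (P M : Type) where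
  | hole : Ctx P M
  | seqL : Ctx P M → GC P M → Ctx P M
  | seqR : GC P M → Ctx P M → Ctx P M
  | parL : Ctx P M → GC P M → Ctx P M
  | parR : GC P M → Ctx P M → Ctx P M
  | choL : Ctx P M → GC P M → Ctx P M
  | choR : GC P M → Ctx P M → Ctx P M

/-- `C.fill g = C[g]`, the replacement of the hole of `C` by `g`. -/
def Ctx.fill : Ctx P M → GC P M → GC P M
  | .hole, g => g
  | .seqL c g2, g => GC.seq (c.fill g) g2
  | .seqR g1 c, g => GC.seq g1 (c.fill g)
  | .parL c g2, g => GC.par (c.fill g) g2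
  | .parR g1 c, g => GC.par g1 (c.fill g)
  | .choL c g2, g => GC.cho (c.fill g) g2
  | .choR g1 c, g => GC.cho g1 (c.fill g)

/-- Typing of one-hole contexts in the type system extended with the axiom
`Γh ⊢ [·] : ⟨φh,Λh⟩` for the hole. -/
inductive CTyping (Γh : Set P) (φh Λh : Set (Label P M)) :
    Set P → Ctx P M → Set (Label P M) → Set (Label P M) → Prop where
  | hole : CTyping Γh φh Λh Γh Ctx.hole φh Λh
  | seqL {Γ1 Γ2 : Set P} {c : Ctx P M} {g : GC P M} {φ1 φ2 Λ1 Λ2 : Set (Label P M)} :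
      CTyping Γh φh Λh Γ1 c φ1 Λ1 → Typing Γ2 g φ2 Λ2 →
      CTyping Γh φh Λh (Γ1 ∪ Γ2) (Ctx.seqL c g) (φ1 ∪ lminus φ2 Γ1) (Λ2 ∪ lminus Λ1 Γ2)
  | seqR {Γ1 Γ2 : Set P} {g : GC P M} {c : Ctx P M} {φ1 φ2 Λ1 Λ2 : Set (Label P M)} :
      Typing Γ1 g φ1 Λ1 → CTyping Γh φh Λh Γ2 c φ2 Λ2 →
      CTyping Γh φh Λh (Γ1 ∪ Γ2) (Ctx.seqR g c) (φ1 ∪ lminus φ2 Γ1) (Λ2 ∪ lminus Λ1 Γ2)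
  | parL {Γ1 Γ2 : Set P} {c : Ctx P M} {g : GC P M} {φ1 φ2 Λ1 Λ2 : Set (Label P M)} :
      CTyping Γh φh Λh Γ1 c φ1 Λ1 → Typing Γ2 g φ2 Λ2 → Γ1 ∩ Γ2 = ∅ →
      CTyping Γh φh Λh (Γ1 ∪ Γ2) (Ctx.parL c g) (φ1 ∪ φ2) (Λ1 ∪ Λ2)
  | parR {Γ1 Γ2 : Set P} {g : GC P M} {c : Ctx P M} {φ1 φ2 Λ1 Λ2 : Set (Label P M)} :
      Typing Γ1 g φ1 Λ1 → CTyping Γh φh Λh Γ2 c φ2 Λ2 → Γ1 ∩ Γ2 = ∅ →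
      CTyping Γh φh Λh (Γ1 ∪ Γ2) (Ctx.parR g c) (φ1 ∪ φ2) (Λ1 ∪ Λ2)
  | choL {Γ : Set P} {c : Ctx P M} {g : GC P M} {φ1 φ2 Λ1 Λ2 : Set (Label P M)} :
      CTyping Γh φh Λh Γ c φ1 Λ1 → Typing Γ g φ2 Λ2 → compch φ1 φ2 Γ →
      CTyping Γh φh Λh Γ (Ctx.choL c g) (φ1 ∪ φ2) (Λ1 ∪ Λ2)
  | choR {Γ : Set P} {g : GC P M} {c : Ctx P M} {φ1 φ2 Λ1 Λ2 : Set (Label P M)} :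
      Typing Γ g φ1 Λ1 → CTyping Γh φh Λh Γ c φ2 Λ2 → compch φ1 φ2 Γ →
      CTyping Γh φh Λh Γ (Ctx.choR g c) (φ1 ∪ φ2) (Λ1 ∪ Λ2)

/-! ## Refinable actions, t-ref, and refinement -/

/-- The three side conditions of the axiom schema t-ref for the refinable action
`A → m1…mn : B1,…,Bn`, represented by the initiator `A` and the nonempty list
`l = [(m1,B1),…,(mn,Bn)]` with pairwise distinct `Bi`. -/
def trefCond (Γ : Set P) (φ Λ : Set (Label P M)) (A : P) (l : List (M × P)) : Prop :=
  l ≠ [] ∧ (l.map Prod.snd).Nodup ∧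
  sbjSet φ = Γ ∧ sbjSet Λ = Γ ∧ sbjSet (φ ∩ Lout) = {A} ∧
  ∀ p ∈ l, ∃ C ∈ Γ, hat Λ p.2 = {Label.inp C p.2 p.1}

/-- `G ref A→m1…mn:B1,…,Bn`: the ground g-choreography `G` refines the refinable action
given by initiator `A` and list `l = [(m1,B1),…,(mn,Bn)]`. -/
def Refines [Nonempty P] [Nonempty M] (G : GC P M) (A : P) (l : List (M × P)) : Prop :=
  ∃ E : ES P M, gsem G = some E ∧
    sbjSet E.minLbl = {A} ∧
    ∀ x ∈ E.MaxC, ∀ p ∈ l, ∃ C ∈ parts G,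
      Label.inp C p.2 p.1 ∈ E.lbl '' (E.maxIn (E.projC x p.2))

/-! ## Multi-hole contexts -/

/-- g-choreography contexts with (numbered) holes. -/
inductive MCtx (P M : Type) where
  | hole : ℕ → MCtx P M
  | nil : MCtx P M
  | act : P → P → M → MCtx P M
  | seq : MCtx P M → MCtx P M → MCtx P M
  | par : MCtx P M → MCtx P M → MCtx P M
  | cho : MCtx P M → MCtx P M → MCtx P M

/-- The (indices of the) holes occurring in a multi-hole context. -/
def MCtx.holes : MCtx P M → List ℕ
  | .hole i => [i]
  | .nil => []
  | .act _ _ _ => []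
  | .seq c1 c2 => c1.holes ++ c2.holes
  | .par c1 c2 => c1.holes ++ c2.holes
  | .cho c1 c2 => c1.holes ++ c2.holes

/-- `C.fill g`: replace each hole `[·]i` by `g i`. -/
def MCtx.fill : MCtx P M → (ℕ → GC P M) → GC P M
  | .hole i, g => g i
  | .nil, _ => GC.nil
  | .act a b m, _ => GC.act a b m
  | .seq c1 c2, g => GC.seq (c1.fill g) (c2.fill g)
  | .par c1 c2, g => GC.par (c1.fill g) (c2.fill g)
  | .cho c1 c2, g => GC.cho (c1.fill g) (c2.fill g)

/-- Typing of multi-hole contexts in the extended type system, where hole `i` is typed by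
the axiom `(σ i).1 ⊢ [·]i : ⟨(σ i).2.1, (σ i).2.2⟩`. -/
inductive MTyping (σ : ℕ → Set P × Set (Label P M) × Set (Label P M)) :
    Set P → MCtx P M → Set (Label P M) → Set (Label P M) → Prop where
  | hole (i : ℕ) : MTyping σ (σ i).1 (MCtx.hole i) (σ i).2.1 (σ i).2.2
  | temp : MTyping σ ∅ MCtx.nil ∅ ∅
  | tint {a b : P} {m : M} (hab : a ≠ b) :
      MTyping σ {a, b} (MCtx.act a b m)
        {Label.out a b m, Label.inp a b m} {Label.out a b m, Label.inp a b m}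
  | tseq {Γ1 Γ2 : Set P} {c1 c2 : MCtx P M} {φ1 φ2 Λ1 Λ2 : Set (Label P M)} :
      MTyping σ Γ1 c1 φ1 Λ1 → MTyping σ Γ2 c2 φ2 Λ2 →
      MTyping σ (Γ1 ∪ Γ2) (MCtx.seq c1 c2) (φ1 ∪ lminus φ2 Γ1) (Λ2 ∪ lminus Λ1 Γ2)
  | tpar {Γ1 Γ2 : Set P} {c1 c2 : MCtx P M} {φ1 φ2 Λ1 Λ2 : Set (Label P M)} :
      MTyping σ Γ1 c1 φ1 Λ1 → MTyping σ Γ2 c2 φ2 Λ2 → Γ1 ∩ Γ2 = ∅ →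
      MTyping σ (Γ1 ∪ Γ2) (MCtx.par c1 c2) (φ1 ∪ φ2) (Λ1 ∪ Λ2)
  | tch {Γ : Set P} {c1 c2 : MCtx P M} {φ1 φ2 Λ1 Λ2 : Set (Label P M)} :
      MTyping σ Γ c1 φ1 Λ1 → MTyping σ Γ c2 φ2 Λ2 → compch φ1 φ2 Γ →
      MTyping σ Γ (MCtx.cho c1 c2) (φ1 ∪ φ2) (Λ1 ∪ Λ2)


/-! ## Auxiliary lemmas for the proof -/

section Aux

variable {P M : Type}

/-- Injectivity of `encSet` on finite sets. -/
theorem encSet_inj {x y : Set ℕ} (hx : x.Finite) (hy : y.Finite)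
    (h : encSet x = encSet y) : x = y := by
  have key : ∀ u : Finset ℕ, ((u.sort (· ≤ ·)).map (fun i => 2^i)).sum = ∑ n ∈ u, 2^n := by
    intro u
    rw [Finset.sum, ← Finset.sort_eq u (· ≤ ·), Multiset.map_coe, Multiset.sum_coe]
  rw [encSet, dif_pos hx, encSet, dif_pos hy] at h
  have hs := Nat.bitIndices_sum_map_two_pow (Finset.sortedLT_sort hx.toFinset)
  have ht := Nat.bitIndices_sum_map_two_pow (Finset.sortedLT_sort hy.toFinset)
  rw [key] at hs ht
  have hsort : hx.toFinset.sort (· ≤ ·) = hy.toFinset.sort (· ≤ ·) := by rw [← hs, ← ht, h]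
  have := congrArg List.toFinset hsort
  rw [Finset.sort_toFinset, Finset.sort_toFinset] at this
  rw [← hx.coe_toFinset, ← hy.coe_toFinset, this]

theorem tagL_inj {e f : ℕ} (h : tagL e = tagL f) : e = f := by
  simpa [tagL, Nat.pair_eq_pair] using h

theorem tagR_inj {e f : ℕ} (h : tagR e = tagR f) : e = f := by
  simpa [tagR, Nat.pair_eq_pair] using h

theorem tagC_inj {k k' e f : ℕ} (h : tagC k e = tagC k' f) : k = k' ∧ e = f := by
  simpa [tagC, Nat.pair_eq_pair] using h

theorem tagL_ne_tagR {e f : ℕ} : tagL e ≠ tagR f := by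
  simp [tagL, tagR, Nat.pair_eq_pair]

theorem tagL_ne_tagC {e k f : ℕ} : tagL e ≠ tagC k f := by
  simp [tagL, tagC, Nat.pair_eq_pair]

@[simp] theorem unpair_tagL (e : ℕ) : Nat.unpair (tagL e) = (0, e) := by
  simp [tagL]

@[simp] theorem unpair_tagR (e : ℕ) : Nat.unpair (tagR e) = (1, e) := by
  simp [tagR]

@[simp] theorem unpair_tagC (k e : ℕ) : Nat.unpair (tagC k e) = (1, Nat.pair k e) := by
  simp [tagC]

/-- The empty set is a configuration. -/
theorem config_empty (E : ES P M) : E.Config ∅ := by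
  refine ⟨by simp, ?_, ?_⟩ <;> simp

/-- A finite event structure has a maximal configuration. -/
theorem exists_maxC (E : ES P M) (hF : E.ev.Finite) : ∃ x, x ∈ E.MaxC := by
  have hfin : {x | E.Config x}.Finite :=
    Set.Finite.subset hF.finite_subsets (fun x hx => hx.1)
  obtain ⟨x, hx, hmax⟩ := hfin.exists_maximalFor id _ ⟨∅, config_empty E⟩
  exact ⟨x, hx, fun y hy hxy => Set.Subset.antisymm (hmax hy hxy) hxy⟩

/-- Membership in `minLblP` characterized. -/
theorem minLblP_iff {E : ES P M} {A : P} {l : Label P M} :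
    l ∈ minLblP E A ↔ ∃ e, e ∈ E.ev ∧ (E.lbl e).sbj = A ∧
      (∀ f, f ∈ E.ev → (E.lbl f).sbj = A → E.le f e → f = e) ∧ E.lbl e = l := by
  simp only [minLblP, ES.minLbl, ES.minEv, ES.minIn, ES.proj, Set.mem_image,
    Set.mem_setOf_eq]
  constructor
  · rintro ⟨e, ⟨⟨he, hA⟩, hmin⟩, hl⟩
    exact ⟨e, he, hA, fun f hf hfA hle => hmin f ⟨hf, hfA⟩ ⟨hle, ⟨hf, hfA⟩, he, hA⟩, hl⟩
  · rintro ⟨e, he, hA, hmin, hl⟩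
    refine ⟨e, ⟨⟨he, hA⟩, ?_⟩, hl⟩
    rintro f ⟨hf, hfA⟩ ⟨hle, -⟩
    exact hmin f hf hfA hle

@[simp] theorem hat_union (U V : Set (Label P M)) (A : P) :
    hat (U ∪ V) A = hat U A ∪ hat V A := by
  ext l; simp [hat]

theorem hat_lminus_mem {φ : Set (Label P M)} {Γ : Set P} {A : P} (h : A ∈ Γ) :
    hat (lminus φ Γ) A = ∅ := by
  ext l; simp only [hat, lminus, Set.mem_setOf_eq, Set.mem_empty_iff_false, iff_false]
  rintro ⟨⟨_, hn⟩, hA⟩; exact hn (hA ▸ h)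

theorem hat_lminus_not_mem {φ : Set (Label P M)} {Γ : Set P} {A : P} (h : A ∉ Γ) :
    hat (lminus φ Γ) A = hat φ A := by
  ext l; simp only [hat, lminus, Set.mem_setOf_eq]
  constructor
  · rintro ⟨⟨hl, _⟩, hA⟩; exact ⟨hl, hA⟩
  · rintro ⟨hl, hA⟩; exact ⟨⟨hl, fun hc => h (hA ▸ hc)⟩, hA⟩

/-- The invariant carried through the induction on typing derivations. -/
structure Inv (Γ : Set P) (φ : Set (Label P M)) (E : ES P M) : Prop where
  fin : E.ev.Finite
  sym : ∀ u v, E.conf u v → E.conf v u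
  minl : ∀ A, minLblP E A = hat φ A
  sub : ∀ e ∈ E.ev, (E.lbl e).sbj ∈ Γ
  exm : ∀ A ∈ Γ, ∃ e ∈ E.ev, (E.lbl e).sbj = A
  max : ∀ x ∈ E.MaxC, ∀ A ∈ Γ, ∃ e ∈ x, (E.lbl e).sbj = A

theorem Inv.mem_of_hat {Γ : Set P} {φ : Set (Label P M)} {E : ES P M}
    (I : Inv Γ φ E) {A : P} (h : hat φ A ≠ ∅) : A ∈ Γ := by
  obtain ⟨l, hl⟩ := Set.nonempty_iff_ne_empty.2 h
  rw [← I.minl] at hl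
  obtain ⟨e, he, hA, -, -⟩ := minLblP_iff.1 hl
  exact hA ▸ I.sub e he


@[simp] theorem lbl_tensor_tagL (E1 E2 : ES P M) (e : ℕ) :
    (esTensor E1 E2).lbl (tagL e) = E1.lbl e := by simp [esTensor]

@[simp] theorem lbl_tensor_tagR (E1 E2 : ES P M) (e : ℕ) :
    (esTensor E1 E2).lbl (tagR e) = E2.lbl e := by simp [esTensor]

@[simp] theorem lbl_seq_tagL (E1 E2 : ES P M) (e : ℕ) :
    (esSeq E1 E2).lbl (tagL e) = E1.lbl e := by simp [esSeq]

@[simp] theorem lbl_seq_tagC (E1 E2 : ES P M) (k e : ℕ) :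
    (esSeq E1 E2).lbl (tagC k e) = E2.lbl e := by simp [esSeq]

theorem minLblP_tensor (E1 E2 : ES P M) (A : P) :
    minLblP (esTensor E1 E2) A = minLblP E1 A ∪ minLblP E2 A := by
  ext l
  simp only [Set.mem_union, minLblP_iff]
  constructor
  · rintro ⟨u, hu, hA, hmin, hl⟩
    rcases hu with ⟨e, he, rfl⟩ | ⟨e, he, rfl⟩
    · left
      rw [lbl_tensor_tagL] at hA hl
      refine ⟨e, he, hA, fun f hf hfA hle => ?_, hl⟩
      have : tagL f = tagL e := hmin (tagL f) (Or.inl ⟨f, hf, rfl⟩)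
        (by rwa [lbl_tensor_tagL]) (Or.inl ⟨f, hf, e, he, hle, rfl, rfl⟩)
      exact tagL_inj this
    · right
      rw [lbl_tensor_tagR] at hA hl
      refine ⟨e, he, hA, fun f hf hfA hle => ?_, hl⟩
      have : tagR f = tagR e := hmin (tagR f) (Or.inr ⟨f, hf, rfl⟩)
        (by rwa [lbl_tensor_tagR]) (Or.inr ⟨f, hf, e, he, hle, rfl, rfl⟩)
      exact tagR_inj this
  · rintro (⟨e, he, hA, hmin, hl⟩ | ⟨e, he, hA, hmin, hl⟩)
    · refine ⟨tagL e, Or.inl ⟨e, he, rfl⟩, by rwa [lbl_tensor_tagL],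
        fun u hu huA hle => ?_, by rwa [lbl_tensor_tagL]⟩
      rcases hle with ⟨a, ha, b, hb, hab, rfl, hbe⟩ | ⟨a, ha, b, hb, hab, rfl, hbe⟩
      · have hbe' := tagL_inj hbe; subst hbe'
        rw [lbl_tensor_tagL] at huA
        rw [hmin a ha huA hab]
      · exact absurd hbe tagL_ne_tagR
    · refine ⟨tagR e, Or.inr ⟨e, he, rfl⟩, by rwa [lbl_tensor_tagR],
        fun u hu huA hle => ?_, by rwa [lbl_tensor_tagR]⟩
      rcases hle with ⟨a, ha, b, hb, hab, rfl, hbe⟩ | ⟨a, ha, b, hb, hab, rfl, hbe⟩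
      · exact absurd hbe.symm tagL_ne_tagR
      · have hbe' := tagR_inj hbe; subst hbe'
        rw [lbl_tensor_tagR] at huA
        rw [hmin a ha huA hab]

theorem minLblP_sum (E1 E2 : ES P M) (A : P) :
    minLblP (esSum E1 E2) A = minLblP E1 A ∪ minLblP E2 A :=
  minLblP_tensor E1 E2 A


theorem encSet_maxC_inj {E : ES P M} (hF : E.ev.Finite) {x x' : Set ℕ}
    (hx : x ∈ E.MaxC) (hx' : x' ∈ E.MaxC) (h : encSet x = encSet x') : x = x' :=
  encSet_inj (hF.subset hx.1.1) (hF.subset hx'.1.1) h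

theorem minLblP_seq_mem (E1 E2 : ES P M) {Γ1 : Set P}
    (hsub : ∀ e ∈ E1.ev, (E1.lbl e).sbj ∈ Γ1)
    (hmax : ∀ x ∈ E1.MaxC, ∀ A ∈ Γ1, ∃ e ∈ x, (E1.lbl e).sbj = A)
    {A : P} (hA : A ∈ Γ1) :
    minLblP (esSeq E1 E2) A = minLblP E1 A := by
  ext l
  simp only [minLblP_iff]
  constructor
  · rintro ⟨u, hu, huA, hmin, hl⟩
    rcases hu with ⟨e, he, rfl⟩ | ⟨x, hx, f, hf, rfl⟩
    · rw [lbl_seq_tagL] at huA hl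
      refine ⟨e, he, huA, fun g hg hgA hle => ?_, hl⟩
      have : tagL g = tagL e := hmin (tagL g) (Or.inl ⟨g, hg, rfl⟩)
        (by rwa [lbl_seq_tagL])
        (Or.inl ⟨g, hg, e, he, hle, rfl, rfl⟩)
      exact tagL_inj this
    · exfalso
      obtain ⟨e, hex, heA⟩ := hmax x hx A hA
      have heE : e ∈ E1.ev := hx.1.1 hex
      rw [lbl_seq_tagC] at huA
      have : tagL e = tagC (encSet x) f := hmin (tagL e) (Or.inl ⟨e, heE, rfl⟩)
        (by rwa [lbl_seq_tagL])
        (Or.inr (Or.inr ⟨x, hx, e, hex, f, hf, by rw [heA, huA], rfl, rfl⟩))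
      exact tagL_ne_tagC this
  · rintro ⟨e, he, heA, hmin, hl⟩
    refine ⟨tagL e, Or.inl ⟨e, he, rfl⟩, by rwa [lbl_seq_tagL],
      fun u hu huA hle => ?_, by rwa [lbl_seq_tagL]⟩
    rcases hle with ⟨a, ha, b, hb, hab, rfl, hbe⟩ |
      ⟨x, hx, a, ha, b, hb, hab, rfl, hbe⟩ | ⟨x, hx, a, ha, b, hb, hsbj, rfl, hbe⟩
    · have hbe' := tagL_inj hbe; subst hbe'
      rw [lbl_seq_tagL] at huA
      rw [hmin a ha huA hab]
    · exact absurd hbe tagL_ne_tagC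
    · exact absurd hbe tagL_ne_tagC

theorem minLblP_seq_not_mem (E1 E2 : ES P M) {Γ1 : Set P} (hF1 : E1.ev.Finite)
    (hsub : ∀ e ∈ E1.ev, (E1.lbl e).sbj ∈ Γ1)
    {A : P} (hA : A ∉ Γ1) :
    minLblP (esSeq E1 E2) A = minLblP E2 A := by
  ext l
  simp only [minLblP_iff]
  constructor
  · rintro ⟨u, hu, huA, hmin, hl⟩
    rcases hu with ⟨e, he, rfl⟩ | ⟨x, hx, f, hf, rfl⟩
    · rw [lbl_seq_tagL] at huA
      exact absurd (huA ▸ hsub e he) hA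
    · rw [lbl_seq_tagC] at huA hl
      refine ⟨f, hf, huA, fun g hg hgA hle => ?_, hl⟩
      have : tagC (encSet x) g = tagC (encSet x) f :=
        hmin (tagC (encSet x) g) (Or.inr ⟨x, hx, g, hg, rfl⟩)
          (by rwa [lbl_seq_tagC])
          (Or.inr (Or.inl ⟨x, hx, g, hg, f, hf, hle, rfl, rfl⟩))
      exact (tagC_inj this).2
  · rintro ⟨e, he, heA, hmin, hl⟩
    obtain ⟨x0, hx0⟩ := exists_maxC E1 hF1
    refine ⟨tagC (encSet x0) e, Or.inr ⟨x0, hx0, e, he, rfl⟩, by rwa [lbl_seq_tagC],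
      fun u hu huA hle => ?_, by rwa [lbl_seq_tagC]⟩
    rcases hle with ⟨a, ha, b, hb, hab, rfl, hbe⟩ |
      ⟨x, hx, a, ha, b, hb, hab, rfl, hbe⟩ | ⟨x, hx, a, ha, b, hb, hsbj, rfl, hbe⟩
    · exact absurd hbe.symm tagL_ne_tagC
    · obtain ⟨hk, hbee⟩ := tagC_inj hbe.symm
      subst hbee
      rw [lbl_seq_tagC] at huA
      rw [hmin a ha huA hab, hk]
    · exfalso
      have haE : a ∈ E1.ev := hx.1.1 ha
      rw [lbl_seq_tagL] at huA
      exact hA (huA ▸ hsub a haE)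


theorem conf_tensor_symm {E1 E2 : ES P M} (s1 : ∀ u v, E1.conf u v → E1.conf v u)
    (s2 : ∀ u v, E2.conf u v → E2.conf v u) :
    ∀ u v, (esTensor E1 E2).conf u v → (esTensor E1 E2).conf v u := by
  rintro u v (⟨e, he, f, hf, hc, rfl, rfl⟩ | ⟨e, he, f, hf, hc, rfl, rfl⟩)
  · exact Or.inl ⟨f, hf, e, he, s1 _ _ hc, rfl, rfl⟩
  · exact Or.inr ⟨f, hf, e, he, s2 _ _ hc, rfl, rfl⟩

theorem conf_sum_symm {E1 E2 : ES P M} (s1 : ∀ u v, E1.conf u v → E1.conf v u)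
    (s2 : ∀ u v, E2.conf u v → E2.conf v u) :
    ∀ u v, (esSum E1 E2).conf u v → (esSum E1 E2).conf v u := by
  rintro u v (h | ⟨e, he, f, hf, (⟨rfl, rfl⟩ | ⟨rfl, rfl⟩)⟩)
  · exact Or.inl (conf_tensor_symm s1 s2 u v h)
  · exact Or.inr ⟨e, he, f, hf, Or.inr ⟨rfl, rfl⟩⟩
  · exact Or.inr ⟨e, he, f, hf, Or.inl ⟨rfl, rfl⟩⟩

theorem conf_seq_symm {E1 E2 : ES P M} (s1 : ∀ u v, E1.conf u v → E1.conf v u)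
    (s2 : ∀ u v, E2.conf u v → E2.conf v u) :
    ∀ u v, (esSeq E1 E2).conf u v → (esSeq E1 E2).conf v u := by
  rintro u v (⟨e, he, f, hf, hc, rfl, rfl⟩ | ⟨x, hx, e, he, f, hf, hc, rfl, rfl⟩ |
    ⟨x, hx, x', hx', hne, e, he, f, hf, rfl, rfl⟩ |
    ⟨x, hx, e, he, hce, f, hf, (⟨rfl, rfl⟩ | ⟨rfl, rfl⟩)⟩)
  · exact Or.inl ⟨f, hf, e, he, s1 _ _ hc, rfl, rfl⟩
  · exact Or.inr (Or.inl ⟨x, hx, f, hf, e, he, s2 _ _ hc, rfl, rfl⟩)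
  · exact Or.inr (Or.inr (Or.inl ⟨x', hx', x, hx, hne.symm, f, hf, e, he, rfl, rfl⟩))
  · exact Or.inr (Or.inr (Or.inr ⟨x, hx, e, he, hce, f, hf, Or.inr ⟨rfl, rfl⟩⟩))
  · exact Or.inr (Or.inr (Or.inr ⟨x, hx, e, he, hce, f, hf, Or.inl ⟨rfl, rfl⟩⟩))

/-- In a maximal configuration of a tensor, the left part is a maximal configuration. -/
theorem maxC_tensor_left {E1 E2 : ES P M} {y : Set ℕ}
    (hy : y ∈ (esTensor E1 E2).MaxC) : {e | e ∈ E1.ev ∧ tagL e ∈ y} ∈ E1.MaxC := by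
  set yL := {e | e ∈ E1.ev ∧ tagL e ∈ y} with hyL
  obtain ⟨⟨hsub, hdc, hcf⟩, hmax⟩ := hy
  have hconfL : E1.Config yL := by
    refine ⟨fun e he => he.1, ?_, ?_⟩
    · rintro e ⟨heE, hey⟩ f hf hle
      exact ⟨hf, hdc _ hey _ (Or.inl ⟨f, hf, rfl⟩) (Or.inl ⟨f, hf, e, heE, hle, rfl, rfl⟩)⟩
    · rintro e ⟨heE, hey⟩ f ⟨hfE, hfy⟩ hc
      exact hcf _ hey _ hfy (Or.inl ⟨e, heE, f, hfE, hc, rfl, rfl⟩)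
  refine ⟨hconfL, fun z hz hzl => ?_⟩
  have hcfg : (esTensor E1 E2).Config (y ∪ tagL '' z) := by
    refine ⟨?_, ?_, ?_⟩
    · rintro u (hu | ⟨e, he, rfl⟩)
      · exact hsub hu
      · exact Or.inl ⟨e, hz.1 he, rfl⟩
    · rintro v (hv | ⟨e, he, rfl⟩) u hu hle
      · exact Or.inl (hdc _ hv _ hu hle)
      · rcases hle with ⟨a, ha, b, hb, hab, rfl, hbe⟩ | ⟨a, ha, b, hb, hab, rfl, hbe⟩
        · have := tagL_inj hbe; subst this
          exact Or.inr ⟨a, hz.2.1 _ he _ ha hab, rfl⟩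
        · exact absurd hbe tagL_ne_tagR
    · rintro u (hu | ⟨e, he, rfl⟩) v (hv | ⟨f, hf, rfl⟩) hc
      · exact hcf _ hu _ hv hc
      · rcases hc with ⟨a, ha, b, hb, hcc, rfl, hbe⟩ | ⟨a, ha, b, hb, hcc, rfl, hbe⟩
        · have := tagL_inj hbe; subst this
          exact hz.2.2 _ (hzl ⟨ha, hu⟩) _ hf hcc
        · exact absurd hbe tagL_ne_tagR
      · rcases hc with ⟨a, ha, b, hb, hcc, hae, hbe⟩ | ⟨a, ha, b, hb, hcc, hae, hbe⟩
        · have h1 := tagL_inj hae; subst h1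
          have hbz : b ∈ z := hzl ⟨hb, hbe ▸ hv⟩
          exact hz.2.2 _ he _ hbz hcc
        · exact absurd hae tagL_ne_tagR
      · rcases hc with ⟨a, ha, b, hb, hcc, hae, hbe⟩ | ⟨a, ha, b, hb, hcc, hae, hbe⟩
        · have h1 := tagL_inj hae; subst h1
          have h2 := tagL_inj hbe; subst h2
          exact hz.2.2 _ he _ hf hcc
        · exact absurd hae tagL_ne_tagR
  have := hmax _ hcfg Set.subset_union_left
  ext e
  constructor
  · intro he
    have h2 : tagL e ∈ y := by rw [← this]; exact Or.inr ⟨e, he, rfl⟩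
    exact ⟨hz.1 he, h2⟩
  · exact fun he => hzl he


/-- In a maximal configuration of a tensor, the right part is a maximal configuration. -/
theorem maxC_tensor_right {E1 E2 : ES P M} {y : Set ℕ}
    (hy : y ∈ (esTensor E1 E2).MaxC) : {e | e ∈ E2.ev ∧ tagR e ∈ y} ∈ E2.MaxC := by
  set yR := {e | e ∈ E2.ev ∧ tagR e ∈ y} with hyR
  obtain ⟨⟨hsub, hdc, hcf⟩, hmax⟩ := hy
  have hconfR : E2.Config yR := by
    refine ⟨fun e he => he.1, ?_, ?_⟩
    · rintro e ⟨heE, hey⟩ f hf hle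
      exact ⟨hf, hdc _ hey _ (Or.inr ⟨f, hf, rfl⟩) (Or.inr ⟨f, hf, e, heE, hle, rfl, rfl⟩)⟩
    · rintro e ⟨heE, hey⟩ f ⟨hfE, hfy⟩ hc
      exact hcf _ hey _ hfy (Or.inr ⟨e, heE, f, hfE, hc, rfl, rfl⟩)
  refine ⟨hconfR, fun z hz hzl => ?_⟩
  have hcfg : (esTensor E1 E2).Config (y ∪ tagR '' z) := by
    refine ⟨?_, ?_, ?_⟩
    · rintro u (hu | ⟨e, he, rfl⟩)
      · exact hsub hu
      · exact Or.inr ⟨e, hz.1 he, rfl⟩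
    · rintro v (hv | ⟨e, he, rfl⟩) u hu hle
      · exact Or.inl (hdc _ hv _ hu hle)
      · rcases hle with ⟨a, ha, b, hb, hab, rfl, hbe⟩ | ⟨a, ha, b, hb, hab, rfl, hbe⟩
        · exact absurd hbe.symm tagL_ne_tagR
        · have := tagR_inj hbe; subst this
          exact Or.inr ⟨a, hz.2.1 _ he _ ha hab, rfl⟩
    · rintro u (hu | ⟨e, he, rfl⟩) v (hv | ⟨f, hf, rfl⟩) hc
      · exact hcf _ hu _ hv hc
      · rcases hc with ⟨a, ha, b, hb, hcc, rfl, hbe⟩ | ⟨a, ha, b, hb, hcc, rfl, hbe⟩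
        · exact absurd hbe.symm tagL_ne_tagR
        · have := tagR_inj hbe; subst this
          exact hz.2.2 _ (hzl ⟨ha, hu⟩) _ hf hcc
      · rcases hc with ⟨a, ha, b, hb, hcc, hae, hbe⟩ | ⟨a, ha, b, hb, hcc, hae, hbe⟩
        · exact absurd hae.symm tagL_ne_tagR
        · have h1 := tagR_inj hae; subst h1
          have hbz : b ∈ z := hzl ⟨hb, hbe ▸ hv⟩
          exact hz.2.2 _ he _ hbz hcc
      · rcases hc with ⟨a, ha, b, hb, hcc, hae, hbe⟩ | ⟨a, ha, b, hb, hcc, hae, hbe⟩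
        · exact absurd hae.symm tagL_ne_tagR
        · have h1 := tagR_inj hae; subst h1
          have h2 := tagR_inj hbe; subst h2
          exact hz.2.2 _ he _ hf hcc
  have := hmax _ hcfg Set.subset_union_left
  ext e
  constructor
  · intro he
    have h2 : tagR e ∈ y := by rw [← this]; exact Or.inr ⟨e, he, rfl⟩
    exact ⟨hz.1 he, h2⟩
  · exact fun he => hzl he

/-- In a maximal configuration of a sum, one side yields a maximal configuration. -/
theorem maxC_sum {E1 E2 : ES P M} {y : Set ℕ}
    (hy : y ∈ (esSum E1 E2).MaxC) :
    {e | e ∈ E1.ev ∧ tagL e ∈ y} ∈ E1.MaxC ∨ {e | e ∈ E2.ev ∧ tagR e ∈ y} ∈ E2.MaxC := by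
  obtain ⟨⟨hsub, hdc, hcf⟩, hmax⟩ := hy
  by_cases hR : ∃ f ∈ E2.ev, tagR f ∈ y
  · right
    obtain ⟨f0, hf0, hf0y⟩ := hR
    have noL : ∀ e ∈ E1.ev, tagL e ∉ y := by
      intro e he hey
      exact hcf _ hey _ hf0y (Or.inr ⟨e, he, f0, hf0, Or.inl ⟨rfl, rfl⟩⟩)
    have shape : ∀ u ∈ y, ∃ e ∈ E2.ev, u = tagR e := by
      intro u hu
      rcases hsub hu with ⟨e, he, rfl⟩ | ⟨e, he, rfl⟩
      · exact absurd hu (noL e he)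
      · exact ⟨e, he, rfl⟩
    refine ⟨⟨fun e he => he.1, ?_, ?_⟩, fun z hz hzl => ?_⟩
    · rintro e ⟨heE, hey⟩ f hf hle
      exact ⟨hf, hdc _ hey _ (Or.inr ⟨f, hf, rfl⟩)
        (Or.inr ⟨f, hf, e, heE, hle, rfl, rfl⟩)⟩
    · rintro e ⟨heE, hey⟩ f ⟨hfE, hfy⟩ hc
      exact hcf _ hey _ hfy (Or.inl (Or.inr ⟨e, heE, f, hfE, hc, rfl, rfl⟩))
    · have hcfg : (esSum E1 E2).Config (y ∪ tagR '' z) := by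
        refine ⟨?_, ?_, ?_⟩
        · rintro u (hu | ⟨e, he, rfl⟩)
          · exact hsub hu
          · exact Or.inr ⟨e, hz.1 he, rfl⟩
        · rintro v (hv | ⟨e, he, rfl⟩) u hu hle
          · exact Or.inl (hdc _ hv _ hu hle)
          · rcases hle with ⟨a, ha, b, hb, hab, rfl, hbe⟩ | ⟨a, ha, b, hb, hab, rfl, hbe⟩
            · exact absurd hbe.symm tagL_ne_tagR
            · have := tagR_inj hbe; subst this
              exact Or.inr ⟨a, hz.2.1 _ he _ ha hab, rfl⟩
        · have key : ∀ a ∈ z, ∀ b ∈ z, ¬ (esSum E1 E2).conf (tagR a) (tagR b) := by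
            rintro a ha b hb ((⟨c, hc, d, hd, hcc, hce, hde⟩ |
              ⟨c, hc, d, hd, hcc, hce, hde⟩) | ⟨c, hc, d, hd, (⟨hce, hde⟩ | ⟨hce, hde⟩)⟩)
            · exact absurd hce.symm tagL_ne_tagR
            · have h1 := tagR_inj hce; subst h1
              have h2 := tagR_inj hde; subst h2
              exact hz.2.2 _ ha _ hb hcc
            · exact absurd hce.symm tagL_ne_tagR
            · exact absurd hde.symm tagL_ne_tagR
          have memz : ∀ u ∈ y ∪ tagR '' z, ∃ e ∈ z, u = tagR e := by
            rintro u (hu | ⟨e, he, rfl⟩)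
            · obtain ⟨e, he, rfl⟩ := shape u hu
              exact ⟨e, hzl ⟨he, hu⟩, rfl⟩
            · exact ⟨e, he, rfl⟩
          intro u hu v hv hc
          obtain ⟨a, ha, rfl⟩ := memz u hu
          obtain ⟨b, hb, rfl⟩ := memz v hv
          exact key a ha b hb hc
      have := hmax _ hcfg Set.subset_union_left
      ext e
      constructor
      · intro he
        have h2 : tagR e ∈ y := by rw [← this]; exact Or.inr ⟨e, he, rfl⟩
        exact ⟨hz.1 he, h2⟩
      · exact fun he => hzl he
  · left
    push_neg at hR
    have shape : ∀ u ∈ y, ∃ e ∈ E1.ev, u = tagL e := by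
      intro u hu
      rcases hsub hu with ⟨e, he, rfl⟩ | ⟨e, he, rfl⟩
      · exact ⟨e, he, rfl⟩
      · exact absurd hu (hR e he)
    refine ⟨⟨fun e he => he.1, ?_, ?_⟩, fun z hz hzl => ?_⟩
    · rintro e ⟨heE, hey⟩ f hf hle
      exact ⟨hf, hdc _ hey _ (Or.inl ⟨f, hf, rfl⟩)
        (Or.inl ⟨f, hf, e, heE, hle, rfl, rfl⟩)⟩
    · rintro e ⟨heE, hey⟩ f ⟨hfE, hfy⟩ hc
      exact hcf _ hey _ hfy (Or.inl (Or.inl ⟨e, heE, f, hfE, hc, rfl, rfl⟩))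
    · have hcfg : (esSum E1 E2).Config (y ∪ tagL '' z) := by
        refine ⟨?_, ?_, ?_⟩
        · rintro u (hu | ⟨e, he, rfl⟩)
          · exact hsub hu
          · exact Or.inl ⟨e, hz.1 he, rfl⟩
        · rintro v (hv | ⟨e, he, rfl⟩) u hu hle
          · exact Or.inl (hdc _ hv _ hu hle)
          · rcases hle with ⟨a, ha, b, hb, hab, rfl, hbe⟩ | ⟨a, ha, b, hb, hab, rfl, hbe⟩
            · have := tagL_inj hbe; subst this
              exact Or.inr ⟨a, hz.2.1 _ he _ ha hab, rfl⟩
            · exact absurd hbe tagL_ne_tagR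
        · have key : ∀ a ∈ z, ∀ b ∈ z, ¬ (esSum E1 E2).conf (tagL a) (tagL b) := by
            rintro a ha b hb ((⟨c, hc, d, hd, hcc, hce, hde⟩ |
              ⟨c, hc, d, hd, hcc, hce, hde⟩) | ⟨c, hc, d, hd, (⟨hce, hde⟩ | ⟨hce, hde⟩)⟩)
            · have h1 := tagL_inj hce; subst h1
              have h2 := tagL_inj hde; subst h2
              exact hz.2.2 _ ha _ hb hcc
            · exact absurd hce tagL_ne_tagR
            · exact absurd hde tagL_ne_tagR
            · exact absurd hce tagL_ne_tagR
          have memz : ∀ u ∈ y ∪ tagL '' z, ∃ e ∈ z, u = tagL e := by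
            rintro u (hu | ⟨e, he, rfl⟩)
            · obtain ⟨e, he, rfl⟩ := shape u hu
              exact ⟨e, hzl ⟨he, hu⟩, rfl⟩
            · exact ⟨e, he, rfl⟩
          intro u hu v hv hc
          obtain ⟨a, ha, rfl⟩ := memz u hu
          obtain ⟨b, hb, rfl⟩ := memz v hv
          exact key a ha b hb hc
      have := hmax _ hcfg Set.subset_union_left
      ext e
      constructor
      · intro he
        have h2 : tagL e ∈ y := by rw [← this]; exact Or.inr ⟨e, he, rfl⟩
        exact ⟨hz.1 he, h2⟩
      · exact fun he => hzl he


/-- Structure of maximal configurations of a sequential composition. -/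
theorem maxC_seq {E1 E2 : ES P M} (hF1 : E1.ev.Finite) (hF2 : E2.ev.Finite)
    (s1 : ∀ u v, E1.conf u v → E1.conf v u) (s2 : ∀ u v, E2.conf u v → E2.conf v u)
    {y : Set ℕ} (hy : y ∈ (esSeq E1 E2).MaxC) :
    ∃ x ∈ E1.MaxC, (∀ e ∈ x, tagL e ∈ y) ∧
      (∅ ∈ E2.MaxC ∨ ∃ z ∈ E2.MaxC, ∀ f ∈ z, tagC (encSet x) f ∈ y) := by
  have hseqsym := conf_seq_symm s1 s2 (E1 := E1) (E2 := E2)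
  obtain ⟨⟨hsub, hdc, hcf⟩, hmax⟩ := hy
  set yL := {e | e ∈ E1.ev ∧ tagL e ∈ y} with hyLdef
  have hconfL : E1.Config yL := by
    refine ⟨fun e he => he.1, ?_, ?_⟩
    · rintro e ⟨heE, hey⟩ f hf hle
      exact ⟨hf, hdc _ hey _ (Or.inl ⟨f, hf, rfl⟩)
        (Or.inl ⟨f, hf, e, heE, hle, rfl, rfl⟩)⟩
    · rintro e ⟨heE, hey⟩ f ⟨hfE, hfy⟩ hc
      exact hcf _ hey _ hfy (Or.inl ⟨e, heE, f, hfE, hc, rfl, rfl⟩)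
  by_cases hC : ∃ x ∈ E1.MaxC, ∃ f ∈ E2.ev, tagC (encSet x) f ∈ y
  · obtain ⟨x, hx, f0, hf0, hf0y⟩ := hC
    have uniq : ∀ x' ∈ E1.MaxC, ∀ f' ∈ E2.ev, tagC (encSet x') f' ∈ y → x' = x := by
      intro x' hx' f' hf' hmem
      by_contra hne
      exact hcf _ hmem _ hf0y
        (Or.inr (Or.inr (Or.inl ⟨x', hx', x, hx, hne, f', hf', f0, hf0, rfl, rfl⟩)))
    have hyLx : yL ⊆ x := by
      have hcfgB : E1.Config (x ∪ yL) := by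
        refine ⟨?_, ?_, ?_⟩
        · rintro e (he | he)
          · exact hx.1.1 he
          · exact he.1
        · rintro e (he | he) f hf hle
          · exact Or.inl (hx.1.2.1 _ he _ hf hle)
          · exact Or.inr (hconfL.2.1 _ he _ hf hle)
        · rintro e (he | he) f (hf | hf) hc
          · exact hx.1.2.2 _ he _ hf hc
          · exact hcf _ hf.2 _ hf0y (Or.inr (Or.inr (Or.inr
              ⟨x, hx, f, hf.1, ⟨e, he, s1 _ _ hc⟩, f0, hf0, Or.inl ⟨rfl, rfl⟩⟩)))
          · exact hcf _ he.2 _ hf0y (Or.inr (Or.inr (Or.inr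
              ⟨x, hx, e, he.1, ⟨f, hf, hc⟩, f0, hf0, Or.inl ⟨rfl, rfl⟩⟩)))
          · exact hconfL.2.2 _ he _ hf hc
      have heq := hx.2 _ hcfgB Set.subset_union_left
      intro e he
      rw [← heq]; exact Or.inr he
    have keyYL : ∀ u ∈ y, ∀ f ∈ x, ¬ (esSeq E1 E2).conf u (tagL f) := by
      intro u hu f hf hc
      rcases hc with ⟨a, ha, b, hb, hcc, rfl, hbe⟩ |
        ⟨xx, hxx, a, ha, b, hb, hcc, rfl, hbe⟩ |
        ⟨xx, hxx, xx', hxx', hne, a, ha, b, hb, rfl, hbe⟩ |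
        ⟨xx, hxx, a, ha, ⟨e0, he0, hce0⟩, b, hb, (⟨rfl, hbe⟩ | ⟨rfl, hbe⟩)⟩
      · have h1 := tagL_inj hbe; subst h1
        exact hx.1.2.2 _ (hyLx ⟨ha, hu⟩) _ hf hcc
      · exact absurd hbe tagL_ne_tagC
      · exact absurd hbe tagL_ne_tagC
      · exact absurd hbe tagL_ne_tagC
      · have h1 := tagL_inj hbe; subst h1
        have hxxeq : xx = x := uniq xx hxx b hb hu
        subst hxxeq
        exact hx.1.2.2 _ hf _ he0 hce0
    have keyLL : ∀ e ∈ x, ∀ f ∈ x, ¬ (esSeq E1 E2).conf (tagL e) (tagL f) := by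
      intro e he f hf hc
      rcases hc with ⟨a, ha, b, hb, hcc, hae, hbe⟩ |
        ⟨xx, hxx, a, ha, b, hb, hcc, hae, hbe⟩ |
        ⟨xx, hxx, xx', hxx', hne, a, ha, b, hb, hae, hbe⟩ |
        ⟨xx, hxx, a, ha, ⟨e0, he0, hce0⟩, b, hb, (⟨hae, hbe⟩ | ⟨hae, hbe⟩)⟩
      · have h1 := tagL_inj hae; subst h1
        have h2 := tagL_inj hbe; subst h2
        exact hx.1.2.2 _ he _ hf hcc
      · exact absurd hae tagL_ne_tagC
      · exact absurd hae tagL_ne_tagC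
      · exact absurd hbe tagL_ne_tagC
      · exact absurd hae tagL_ne_tagC
    have hcfgD : (esSeq E1 E2).Config (y ∪ tagL '' x) := by
      refine ⟨?_, ?_, ?_⟩
      · rintro u (hu | ⟨e, he, rfl⟩)
        · exact hsub hu
        · exact Or.inl ⟨e, hx.1.1 he, rfl⟩
      · rintro v (hv | ⟨e, he, rfl⟩) u hu hle
        · exact Or.inl (hdc _ hv _ hu hle)
        · rcases hle with ⟨a, ha, b, hb, hab, rfl, hbe⟩ |
            ⟨xx, hxx, a, ha, b, hb, hab, rfl, hbe⟩ |
            ⟨xx, hxx, a, hax, b, hb, hsbj, rfl, hbe⟩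
          · have h1 := tagL_inj hbe; subst h1
            exact Or.inr ⟨a, hx.1.2.1 _ he _ ha hab, rfl⟩
          · exact absurd hbe tagL_ne_tagC
          · exact absurd hbe tagL_ne_tagC
      · rintro u (hu | ⟨e, he, rfl⟩) v (hv | ⟨f, hf, rfl⟩) hc
        · exact hcf _ hu _ hv hc
        · exact keyYL u hu f hf hc
        · exact keyYL v hv e he (hseqsym _ _ hc)
        · exact keyLL e he f hf hc
    have heqD := hmax _ hcfgD Set.subset_union_left
    have hmemL : ∀ e ∈ x, tagL e ∈ y := by
      intro e he
      rw [← heqD]; exact Or.inr ⟨e, he, rfl⟩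
    set yC := {f | f ∈ E2.ev ∧ tagC (encSet x) f ∈ y} with hyCdef
    have hconfC : E2.Config yC := by
      refine ⟨fun f hf => hf.1, ?_, ?_⟩
      · rintro f ⟨hfE, hfy⟩ g hg hle
        exact ⟨hg, hdc _ hfy _ (Or.inr ⟨x, hx, g, hg, rfl⟩)
          (Or.inr (Or.inl ⟨x, hx, g, hg, f, hfE, hle, rfl, rfl⟩))⟩
      · rintro f ⟨hfE, hfy⟩ g ⟨hgE, hgy⟩ hc
        exact hcf _ hfy _ hgy (Or.inr (Or.inl ⟨x, hx, f, hfE, g, hgE, hc, rfl, rfl⟩))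
    have hCmax : yC ∈ E2.MaxC := by
      refine ⟨hconfC, fun z hz hzl => ?_⟩
      have keyYC : ∀ u ∈ y, ∀ g ∈ z, ¬ (esSeq E1 E2).conf u (tagC (encSet x) g) := by
        intro u hu g hg hc
        rcases hsub hu with ⟨a, ha, hua⟩ | ⟨xx, hxx, b, hb, hub⟩
        · subst hua
          rcases hc with ⟨c, hcE, d, hd, hcc, hue, hve⟩ |
            ⟨x', hx', c, hcE, d, hd, hcc, hue, hve⟩ |
            ⟨x', hx', x'', hx'', hne, c, hcE, d, hd, hue, hve⟩ |
            ⟨x', hx', c, hcE, ⟨e0, he0, hce0⟩, d, hd, (⟨hue, hve⟩ | ⟨hue, hve⟩)⟩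
          · exact absurd hve.symm tagL_ne_tagC
          · exact absurd hue tagL_ne_tagC
          · exact absurd hue tagL_ne_tagC
          · have h1 := tagL_inj hue; subst h1
            have hxeq : x = x' := encSet_maxC_inj hF1 hx hx' (tagC_inj hve).1
            have he0' : e0 ∈ x := by rw [hxeq]; exact he0
            exact hx.1.2.2 _ (hyLx ⟨hcE, hu⟩) _ he0' hce0
          · exact absurd hue tagL_ne_tagC
        · subst hub
          have hxxeq : xx = x := uniq xx hxx b hb hu
          rw [hxxeq] at hu hc
          rcases hc with ⟨c, hcE, d, hd, hcc, hue, hve⟩ |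
            ⟨x', hx', c, hcE, d, hd, hcc, hue, hve⟩ |
            ⟨x', hx', x'', hx'', hne, c, hcE, d, hd, hue, hve⟩ |
            ⟨x', hx', c, hcE, ⟨e0, he0, hce0⟩, d, hd, (⟨hue, hve⟩ | ⟨hue, hve⟩)⟩
          · exact absurd hue.symm tagL_ne_tagC
          · have h1 := (tagC_inj hue).2; subst h1
            have h2 := (tagC_inj hve).2; subst h2
            exact hz.2.2 _ (hzl ⟨hb, hu⟩) _ hg hcc
          · have h1 : x = x' := encSet_maxC_inj hF1 hx hx' (tagC_inj hue).1
            have h2 : x = x'' := encSet_maxC_inj hF1 hx hx'' (tagC_inj hve).1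
            exact hne (h1 ▸ h2)
          · exact absurd hue.symm tagL_ne_tagC
          · exact absurd hve.symm tagL_ne_tagC
      have keyCC : ∀ f ∈ z, ∀ g ∈ z,
          ¬ (esSeq E1 E2).conf (tagC (encSet x) f) (tagC (encSet x) g) := by
        intro f hf g hg hc
        rcases hc with ⟨c, hcE, d, hd, hcc, hue, hve⟩ |
          ⟨x', hx', c, hcE, d, hd, hcc, hue, hve⟩ |
          ⟨x', hx', x'', hx'', hne, c, hcE, d, hd, hue, hve⟩ |
          ⟨x', hx', c, hcE, ⟨e0, he0, hce0⟩, d, hd, (⟨hue, hve⟩ | ⟨hue, hve⟩)⟩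
        · exact absurd hue.symm tagL_ne_tagC
        · have h1 := (tagC_inj hue).2; subst h1
          have h2 := (tagC_inj hve).2; subst h2
          exact hz.2.2 _ hf _ hg hcc
        · have h1 : x = x' := encSet_maxC_inj hF1 hx hx' (tagC_inj hue).1
          have h2 : x = x'' := encSet_maxC_inj hF1 hx hx'' (tagC_inj hve).1
          exact hne (h1 ▸ h2)
        · exact absurd hue.symm tagL_ne_tagC
        · exact absurd hve.symm tagL_ne_tagC
      have hcfgG : (esSeq E1 E2).Config (y ∪ tagC (encSet x) '' z) := by
        refine ⟨?_, ?_, ?_⟩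
        · rintro u (hu | ⟨f, hf, rfl⟩)
          · exact hsub hu
          · exact Or.inr ⟨x, hx, f, hz.1 hf, rfl⟩
        · rintro v (hv | ⟨f, hf, rfl⟩) u hu hle
          · exact Or.inl (hdc _ hv _ hu hle)
          · rcases hle with ⟨a, ha, b, hb, hab, rfl, hbe⟩ |
              ⟨xx, hxx, a, ha, b, hb, hab, rfl, hbe⟩ |
              ⟨xx, hxx, a, hax, b, hb, hsbj, rfl, hbe⟩
            · exact absurd hbe.symm tagL_ne_tagC
            · have hxe : x = xx := encSet_maxC_inj hF1 hx hxx (tagC_inj hbe).1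
              have h2 := (tagC_inj hbe).2; subst h2
              exact Or.inr ⟨a, hz.2.1 _ hf _ ha hab, by rw [hxe]⟩
            · have hxe : x = xx := encSet_maxC_inj hF1 hx hxx (tagC_inj hbe).1
              have hax' : a ∈ x := by rw [hxe]; exact hax
              exact Or.inl (hmemL a hax')
        · rintro u (hu | ⟨f, hf, rfl⟩) v (hv | ⟨g, hg, rfl⟩) hc
          · exact hcf _ hu _ hv hc
          · exact keyYC u hu g hg hc
          · exact keyYC v hv f hf (hseqsym _ _ hc)
          · exact keyCC f hf g hg hc
      have heqG := hmax _ hcfgG Set.subset_union_left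
      ext f
      constructor
      · intro hf
        have h2 : tagC (encSet x) f ∈ y := by rw [← heqG]; exact Or.inr ⟨f, hf, rfl⟩
        exact ⟨hz.1 hf, h2⟩
      · exact fun hf => hzl hf
    exact ⟨x, hx, hmemL, Or.inr ⟨yC, hCmax, fun f hf => hf.2⟩⟩
  · push_neg at hC
    have shape : ∀ u ∈ y, ∃ e, e ∈ E1.ev ∧ u = tagL e := by
      intro u hu
      rcases hsub hu with ⟨e, he, rfl⟩ | ⟨x, hx, f, hf, rfl⟩
      · exact ⟨e, he, rfl⟩
      · exact absurd hu (hC x hx f hf)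
    have hyLmax : yL ∈ E1.MaxC := by
      refine ⟨hconfL, fun z hz hzl => ?_⟩
      have keyLL : ∀ a ∈ z, ∀ b ∈ z, ¬ (esSeq E1 E2).conf (tagL a) (tagL b) := by
        intro a ha b hb hc
        rcases hc with ⟨c, hcE, d, hd, hcc, hue, hve⟩ |
          ⟨x', hx', c, hcE, d, hd, hcc, hue, hve⟩ |
          ⟨x', hx', x'', hx'', hne, c, hcE, d, hd, hue, hve⟩ |
          ⟨x', hx', c, hcE, ⟨e0, he0, hce0⟩, d, hd, (⟨hue, hve⟩ | ⟨hue, hve⟩)⟩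
        · have h1 := tagL_inj hue; subst h1
          have h2 := tagL_inj hve; subst h2
          exact hz.2.2 _ ha _ hb hcc
        · exact absurd hue tagL_ne_tagC
        · exact absurd hue tagL_ne_tagC
        · exact absurd hve tagL_ne_tagC
        · exact absurd hue tagL_ne_tagC
      have hcfg : (esSeq E1 E2).Config (y ∪ tagL '' z) := by
        refine ⟨?_, ?_, ?_⟩
        · rintro u (hu | ⟨e, he, rfl⟩)
          · exact hsub hu
          · exact Or.inl ⟨e, hz.1 he, rfl⟩
        · rintro v (hv | ⟨e, he, rfl⟩) u hu hle
          · exact Or.inl (hdc _ hv _ hu hle)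
          · rcases hle with ⟨a, ha, b, hb, hab, rfl, hbe⟩ |
              ⟨xx, hxx, a, ha, b, hb, hab, rfl, hbe⟩ |
              ⟨xx, hxx, a, hax, b, hb, hsbj, rfl, hbe⟩
            · have h1 := tagL_inj hbe; subst h1
              exact Or.inr ⟨a, hz.2.1 _ he _ ha hab, rfl⟩
            · exact absurd hbe tagL_ne_tagC
            · exact absurd hbe tagL_ne_tagC
        · have memz : ∀ u ∈ y ∪ tagL '' z, ∃ e ∈ z, u = tagL e := by
            rintro u (hu | ⟨e, he, rfl⟩)
            · obtain ⟨e, he, rfl⟩ := shape u hu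
              exact ⟨e, hzl ⟨he, hu⟩, rfl⟩
            · exact ⟨e, he, rfl⟩
          intro u hu v hv hc
          obtain ⟨a, ha, rfl⟩ := memz u hu
          obtain ⟨b, hb, rfl⟩ := memz v hv
          exact keyLL a ha b hb hc
      have heq := hmax _ hcfg Set.subset_union_left
      ext e
      constructor
      · intro he
        have h2 : tagL e ∈ y := by rw [← heq]; exact Or.inr ⟨e, he, rfl⟩
        exact ⟨hz.1 he, h2⟩
      · exact fun he => hzl he
    obtain ⟨z2, hz2⟩ := exists_maxC E2 hF2
    have hcfgJ : (esSeq E1 E2).Config (y ∪ tagC (encSet yL) '' z2) := by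
      refine ⟨?_, ?_, ?_⟩
      · rintro u (hu | ⟨f, hf, rfl⟩)
        · exact hsub hu
        · exact Or.inr ⟨yL, hyLmax, f, hz2.1.1 hf, rfl⟩
      · rintro v (hv | ⟨f, hf, rfl⟩) u hu hle
        · exact Or.inl (hdc _ hv _ hu hle)
        · rcases hle with ⟨a, ha, b, hb, hab, rfl, hbe⟩ |
            ⟨xx, hxx, a, ha, b, hb, hab, rfl, hbe⟩ |
            ⟨xx, hxx, a, hax, b, hb, hsbj, rfl, hbe⟩
          · exact absurd hbe.symm tagL_ne_tagC
          · have hxe : yL = xx := encSet_maxC_inj hF1 hyLmax hxx (tagC_inj hbe).1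
            have h2 := (tagC_inj hbe).2; subst h2
            exact Or.inr ⟨a, hz2.1.2.1 _ hf _ ha hab, by rw [hxe]⟩
          · have hxe : yL = xx := encSet_maxC_inj hF1 hyLmax hxx (tagC_inj hbe).1
            have hax' : a ∈ yL := by rw [hxe]; exact hax
            exact Or.inl hax'.2
      · have keyY2 : ∀ u ∈ y, ∀ g ∈ z2, ¬ (esSeq E1 E2).conf u (tagC (encSet yL) g) := by
          intro u hu g hg hc
          obtain ⟨a, ha, rfl⟩ := shape u hu
          rcases hc with ⟨c, hcE, d, hd, hcc, hue, hve⟩ |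
            ⟨x', hx', c, hcE, d, hd, hcc, hue, hve⟩ |
            ⟨x', hx', x'', hx'', hne, c, hcE, d, hd, hue, hve⟩ |
            ⟨x', hx', c, hcE, ⟨e0, he0, hce0⟩, d, hd, (⟨hue, hve⟩ | ⟨hue, hve⟩)⟩
          · exact absurd hve.symm tagL_ne_tagC
          · exact absurd hue tagL_ne_tagC
          · exact absurd hue tagL_ne_tagC
          · have h1 := tagL_inj hue; subst h1
            have hxeq : yL = x' := encSet_maxC_inj hF1 hyLmax hx' (tagC_inj hve).1
            have he0' : e0 ∈ yL := by rw [hxeq]; exact he0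
            exact hconfL.2.2 _ ⟨hcE, hu⟩ _ he0' hce0
          · exact absurd hue tagL_ne_tagC
        have keyC2 : ∀ f ∈ z2, ∀ g ∈ z2,
            ¬ (esSeq E1 E2).conf (tagC (encSet yL) f) (tagC (encSet yL) g) := by
          intro f hf g hg hc
          rcases hc with ⟨c, hcE, d, hd, hcc, hue, hve⟩ |
            ⟨x', hx', c, hcE, d, hd, hcc, hue, hve⟩ |
            ⟨x', hx', x'', hx'', hne, c, hcE, d, hd, hue, hve⟩ |
            ⟨x', hx', c, hcE, ⟨e0, he0, hce0⟩, d, hd, (⟨hue, hve⟩ | ⟨hue, hve⟩)⟩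
          · exact absurd hue.symm tagL_ne_tagC
          · have h1 := (tagC_inj hue).2; subst h1
            have h2 := (tagC_inj hve).2; subst h2
            exact hz2.1.2.2 _ hf _ hg hcc
          · have h1 : yL = x' := encSet_maxC_inj hF1 hyLmax hx' (tagC_inj hue).1
            have h2 : yL = x'' := encSet_maxC_inj hF1 hyLmax hx'' (tagC_inj hve).1
            exact hne (h1 ▸ h2)
          · exact absurd hue.symm tagL_ne_tagC
          · exact absurd hve.symm tagL_ne_tagC
        rintro u (hu | ⟨f, hf, rfl⟩) v (hv | ⟨g, hg, rfl⟩) hc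
        · exact hcf _ hu _ hv hc
        · exact keyY2 u hu g hg hc
        · exact keyY2 v hv f hf (hseqsym _ _ hc)
        · exact keyC2 f hf g hg hc
    have heqJ := hmax _ hcfgJ Set.subset_union_left
    have hz2e : z2 = ∅ := by
      rw [Set.eq_empty_iff_forall_notMem]
      intro f hf
      have h2 : tagC (encSet yL) f ∈ y := by rw [← heqJ]; exact Or.inr ⟨f, hf, rfl⟩
      exact hC yL hyLmax f (hz2.1.1 hf) h2
    exact ⟨yL, hyLmax, fun e he => he.2, Or.inl (hz2e ▸ hz2)⟩


theorem inv_empty [Nonempty P] [Nonempty M] :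
    Inv (∅ : Set P) (∅ : Set (Label P M)) esEmpty := by
  refine ⟨?_, ?_, ?_, ?_, ?_, ?_⟩
  · simp [esEmpty]
  · rintro u v h; exact h.elim
  · intro A
    ext l
    simp only [minLblP_iff, hat, Set.mem_setOf_eq, Set.mem_empty_iff_false, false_and,
      iff_false]
    rintro ⟨e, he, -⟩
    simp [esEmpty] at he
  · rintro e he; simp [esEmpty] at he
  · rintro A hA; simp at hA
  · rintro x hx A hA; simp at hA

theorem inv_act {a b : P} {m : M} (hab : a ≠ b) :
    Inv {a, b} {Label.out a b m, Label.inp a b m} (esAct a b m) := by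
  have hlbl0 : (esAct a b m).lbl 0 = Label.out a b m := by simp [esAct]
  have hlbl1 : (esAct a b m).lbl 1 = Label.inp a b m := by simp [esAct]
  have hev : (esAct a b m).ev = {0, 1} := rfl
  refine ⟨?_, ?_, ?_, ?_, ?_, ?_⟩
  · rw [hev]; exact (Set.finite_singleton 1).insert 0
  · rintro u v h; exact h.elim
  · intro A
    ext l
    rw [minLblP_iff]
    simp only [hat, Set.mem_setOf_eq, Set.mem_insert_iff, Set.mem_singleton_iff]
    constructor
    · rintro ⟨e, he, hA, hmin, hl⟩
      rcases he with rfl | he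
      · rw [hlbl0] at hA hl
        exact ⟨Or.inl hl.symm, by rw [← hl]; exact hA⟩
      · rw [Set.mem_singleton_iff] at he; subst he
        rw [hlbl1] at hA hl
        exact ⟨Or.inr hl.symm, by rw [← hl]; exact hA⟩
    · rintro ⟨rfl | rfl, hA⟩
      · refine ⟨0, Or.inl rfl, by rw [hlbl0]; exact hA, ?_, hlbl0⟩
        rintro f hf hfA (⟨rfl, -⟩ | ⟨rfl, h10⟩ | ⟨rfl, h10⟩)
        · rfl
        · exact absurd h10 one_ne_zero.symm
        · exact absurd h10 one_ne_zero.symm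
      · refine ⟨1, Or.inr rfl, by rw [hlbl1]; exact hA, ?_, hlbl1⟩
        rintro f hf hfA (⟨rfl, h01⟩ | ⟨rfl, -⟩ | ⟨rfl, -⟩)
        · exact absurd h01 one_ne_zero
        · exfalso
          rw [hlbl0] at hfA
          rw [← hA] at hfA
          exact hab (by simpa [Label.sbj] using hfA)
        · rfl
  · rintro e (rfl | he)
    · rw [hlbl0]; exact Or.inl rfl
    · rw [Set.mem_singleton_iff] at he; subst he
      rw [hlbl1]; exact Or.inr rfl
  · rintro A (rfl | hA)
    · exact ⟨0, Or.inl rfl, by rw [hlbl0]; rfl⟩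
    · rw [Set.mem_singleton_iff] at hA; subst hA
      exact ⟨1, Or.inr rfl, by rw [hlbl1]; rfl⟩
  · rintro x hx A hA
    have hcfg : (esAct a b m).Config {0, 1} := by
      refine ⟨fun e he => he, fun e he f hf _ => hf, ?_⟩
      rintro e he f hf h; exact h
    have hxeq := hx.2 _ hcfg hx.1.1
    rcases hA with rfl | hA
    · exact ⟨0, by rw [← hxeq]; exact Or.inl rfl, by rw [hlbl0]; rfl⟩
    · rw [Set.mem_singleton_iff] at hA; subst hA
      exact ⟨1, by rw [← hxeq]; exact Or.inr rfl, by rw [hlbl1]; rfl⟩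

theorem inv_tensor {Γ1 Γ2 : Set P} {φ1 φ2 : Set (Label P M)} {E1 E2 : ES P M}
    (I1 : Inv Γ1 φ1 E1) (I2 : Inv Γ2 φ2 E2) :
    Inv (Γ1 ∪ Γ2) (φ1 ∪ φ2) (esTensor E1 E2) := by
  refine ⟨?_, conf_tensor_symm I1.sym I2.sym, ?_, ?_, ?_, ?_⟩
  · exact (I1.fin.image tagL).union (I2.fin.image tagR)
  · intro A
    rw [minLblP_tensor, I1.minl, I2.minl, hat_union]
  · rintro u (⟨e, he, rfl⟩ | ⟨e, he, rfl⟩)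
    · rw [lbl_tensor_tagL]; exact Or.inl (I1.sub e he)
    · rw [lbl_tensor_tagR]; exact Or.inr (I2.sub e he)
  · rintro A (hA | hA)
    · obtain ⟨e, he, hsbj⟩ := I1.exm A hA
      exact ⟨tagL e, Or.inl ⟨e, he, rfl⟩, by rw [lbl_tensor_tagL]; exact hsbj⟩
    · obtain ⟨e, he, hsbj⟩ := I2.exm A hA
      exact ⟨tagR e, Or.inr ⟨e, he, rfl⟩, by rw [lbl_tensor_tagR]; exact hsbj⟩
  · rintro x hx A (hA | hA)
    · obtain ⟨e, he, hsbj⟩ := I1.max _ (maxC_tensor_left hx) A hA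
      exact ⟨tagL e, he.2, by rw [lbl_tensor_tagL]; exact hsbj⟩
    · obtain ⟨e, he, hsbj⟩ := I2.max _ (maxC_tensor_right hx) A hA
      exact ⟨tagR e, he.2, by rw [lbl_tensor_tagR]; exact hsbj⟩

theorem lbl_sum_tagL (E1 E2 : ES P M) (e : ℕ) :
    (esSum E1 E2).lbl (tagL e) = E1.lbl e := lbl_tensor_tagL E1 E2 e

theorem lbl_sum_tagR (E1 E2 : ES P M) (e : ℕ) :
    (esSum E1 E2).lbl (tagR e) = E2.lbl e := lbl_tensor_tagR E1 E2 e

theorem inv_sum {Γ : Set P} {φ1 φ2 : Set (Label P M)} {E1 E2 : ES P M}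
    (I1 : Inv Γ φ1 E1) (I2 : Inv Γ φ2 E2) :
    Inv Γ (φ1 ∪ φ2) (esSum E1 E2) := by
  refine ⟨?_, conf_sum_symm I1.sym I2.sym, ?_, ?_, ?_, ?_⟩
  · exact (I1.fin.image tagL).union (I2.fin.image tagR)
  · intro A
    rw [minLblP_sum, I1.minl, I2.minl, hat_union]
  · rintro u (⟨e, he, rfl⟩ | ⟨e, he, rfl⟩)
    · rw [lbl_sum_tagL]; exact I1.sub e he
    · rw [lbl_sum_tagR]; exact I2.sub e he
  · rintro A hA
    obtain ⟨e, he, hsbj⟩ := I1.exm A hA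
    exact ⟨tagL e, Or.inl ⟨e, he, rfl⟩, by rw [lbl_sum_tagL]; exact hsbj⟩
  · rintro x hx A hA
    rcases maxC_sum hx with hL | hR
    · obtain ⟨e, he, hsbj⟩ := I1.max _ hL A hA
      exact ⟨tagL e, he.2, by rw [lbl_sum_tagL]; exact hsbj⟩
    · obtain ⟨e, he, hsbj⟩ := I2.max _ hR A hA
      exact ⟨tagR e, he.2, by rw [lbl_sum_tagR]; exact hsbj⟩

theorem inv_seq {Γ1 Γ2 : Set P} {φ1 φ2 : Set (Label P M)} {E1 E2 : ES P M}
    (I1 : Inv Γ1 φ1 E1) (I2 : Inv Γ2 φ2 E2) :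
    Inv (Γ1 ∪ Γ2) (φ1 ∪ lminus φ2 Γ1) (esSeq E1 E2) := by
  refine ⟨?_, conf_seq_symm I1.sym I2.sym, ?_, ?_, ?_, ?_⟩
  · refine Set.Finite.union (I1.fin.image tagL) ?_
    have hM : E1.MaxC.Finite := I1.fin.finite_subsets.subset (fun x hx => hx.1.1)
    refine Set.Finite.subset (hM.biUnion (fun x _ => I2.fin.image (fun e => tagC (encSet x) e)))
      ?_
    rintro u ⟨x, hx, e, he, rfl⟩
    exact Set.mem_biUnion hx ⟨e, he, rfl⟩
  · intro A
    by_cases hA1 : A ∈ Γ1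
    · rw [minLblP_seq_mem E1 E2 I1.sub I1.max hA1, hat_union, hat_lminus_mem hA1,
        I1.minl, Set.union_empty]
    · rw [minLblP_seq_not_mem E1 E2 I1.fin I1.sub hA1, hat_union,
        hat_lminus_not_mem hA1, I2.minl]
      have h1 : hat φ1 A = ∅ := by
        by_contra hne
        exact hA1 (I1.mem_of_hat hne)
      rw [h1, Set.empty_union]
  · rintro u (⟨e, he, rfl⟩ | ⟨x, hx, f, hf, rfl⟩)
    · rw [lbl_seq_tagL]; exact Or.inl (I1.sub e he)
    · rw [lbl_seq_tagC]; exact Or.inr (I2.sub f hf)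
  · rintro A (hA | hA)
    · obtain ⟨e, he, hsbj⟩ := I1.exm A hA
      exact ⟨tagL e, Or.inl ⟨e, he, rfl⟩, by rw [lbl_seq_tagL]; exact hsbj⟩
    · obtain ⟨x0, hx0⟩ := exists_maxC E1 I1.fin
      obtain ⟨f, hf, hsbj⟩ := I2.exm A hA
      exact ⟨tagC (encSet x0) f, Or.inr ⟨x0, hx0, f, hf, rfl⟩,
        by rw [lbl_seq_tagC]; exact hsbj⟩
  · rintro y hy A hA
    obtain ⟨x, hx, hmemx, hrest⟩ := maxC_seq I1.fin I2.fin I1.sym I2.sym hy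
    rcases hA with hA1 | hA2
    · obtain ⟨e, hex, hsbj⟩ := I1.max x hx A hA1
      exact ⟨tagL e, hmemx e hex, by rw [lbl_seq_tagL]; exact hsbj⟩
    · rcases hrest with hempty | ⟨z, hz, hmemz⟩
      · obtain ⟨e, he, -⟩ := I2.max ∅ hempty A hA2
        exact absurd he (Set.notMem_empty e)
      · obtain ⟨f, hfz, hsbj⟩ := I2.max z hz A hA2
        exact ⟨tagC (encSet x) f, hmemz f hfz, by rw [lbl_seq_tagC]; exact hsbj⟩

theorem wb_of_inv {Γ : Set P} {φ1 φ2 : Set (Label P M)} {E1 E2 : ES P M}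
    (I1 : Inv Γ φ1 E1) (I2 : Inv Γ φ2 E2) (hc : compch φ1 φ2 Γ) : wb E1 E2 := by
  obtain ⟨A, hAΓ, ⟨hout, hne1, hne2⟩, huniq, hpass⟩ := hc
  refine ⟨A, ?_, ?_, ?_⟩
  · exact ⟨by rw [I1.minl]; exact hne1, by rw [I2.minl]; exact hne2,
      by rw [I1.minl, I2.minl]; exact hout.1, by rw [I1.minl, I2.minl]; exact hout.2⟩
  · intro A' hact
    obtain ⟨h1, h2, h3, h4⟩ := hact
    rw [I1.minl] at h1 h3 h4
    rw [I2.minl] at h2 h3 h4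
    exact huniq A' (I1.mem_of_hat h1) ⟨⟨h3, h4⟩, h1, h2⟩
  · intro B hB
    by_cases hBΓ : B ∈ Γ
    · obtain ⟨hin, hiff⟩ := hpass B hBΓ hB
      exact ⟨by rw [I1.minl, I2.minl]; exact hin.1,
        by rw [I1.minl, I2.minl]; exact hin.2,
        by rw [I1.minl, I2.minl]; exact hiff⟩
    · have h1 : hat φ1 B = ∅ := by
        by_contra hne; exact hBΓ (I1.mem_of_hat hne)
      have h2 : hat φ2 B = ∅ := by
        by_contra hne; exact hBΓ (I2.mem_of_hat hne)
      refine ⟨?_, ?_, ?_⟩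
      · rw [I1.minl, I2.minl, h1, h2]; exact disjoint_bot_left
      · rw [I1.minl, I2.minl, h1, h2]; simp
      · rw [I1.minl, I2.minl, h1, h2]

/-- Soundness: typing implies definedness of the semantics together with the invariant. -/
theorem typing_sound [Nonempty P] [Nonempty M] {Γ : Set P} {g : GC P M}
    {φ Λ : Set (Label P M)} (h : Typing Γ g φ Λ) :
    ∃ E, gsem g = some E ∧ Inv Γ φ E := by
  induction h with
  | temp => exact ⟨esEmpty, rfl, inv_empty⟩
  | @tint a b m hab => exact ⟨esAct a b m, by simp [gsem, hab], inv_act hab⟩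
  | tseq h1 h2 ih1 ih2 =>
      obtain ⟨E1, hE1, I1⟩ := ih1
      obtain ⟨E2, hE2, I2⟩ := ih2
      exact ⟨esSeq E1 E2, by simp [gsem, hE1, hE2], inv_seq I1 I2⟩
  | tpar h1 h2 hdisj ih1 ih2 =>
      obtain ⟨E1, hE1, I1⟩ := ih1
      obtain ⟨E2, hE2, I2⟩ := ih2
      have hdis : Disjoint E1.lblSet E2.lblSet := by
        rw [Set.disjoint_left]
        rintro l ⟨e, he, rfl⟩ ⟨f, hf, hlf⟩
        have h1s := I1.sub e he
        have h2s := I2.sub f hf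
        rw [hlf] at h2s
        have : (E1.lbl e).sbj ∈ (∅ : Set P) := hdisj ▸ ⟨h1s, h2s⟩
        exact this
      exact ⟨esTensor E1 E2, by simp [gsem, hE1, hE2, hdis], inv_tensor I1 I2⟩
  | tch h1 h2 hcomp ih1 ih2 =>
      obtain ⟨E1, hE1, I1⟩ := ih1
      obtain ⟨E2, hE2, I2⟩ := ih2
      have hwb : wb E1 E2 := wb_of_inv I1 I2 hcomp
      exact ⟨esSum E1 E2, by simp [gsem, hE1, hE2, hwb], inv_sum I1 I2⟩

end Aux







/-- Compatibility implies well-branchedness: if `Π ⊢ G1 : ⟨φ1,Λ1⟩`, `Π ⊢ G2 : ⟨φ2,Λ2⟩`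
and `compch(φ1,φ2,Π)` hold, then `⟦G1⟧` and `⟦G2⟧` are well-branched, and consequently
`⟦G1+G2⟧ = ⟦G1⟧+⟦G2⟧ ≠ ⊥`. -/
theorem compch_wb {P M : Type} [Infinite P] [Infinite M]
    {Γ : Set P} {G1 G2 : GC P M} {φ1 φ2 Λ1 Λ2 : Set (Label P M)}
    (h1 : Typing Γ G1 φ1 Λ1) (h2 : Typing Γ G2 φ2 Λ2) (hc : compch φ1 φ2 Γ) :
    ∃ E1 E2 : ES P M, gsem G1 = some E1 ∧ gsem G2 = some E2 ∧ wb E1 E2 ∧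
      gsem (GC.cho G1 G2) = some (esSum E1 E2) := by
  obtain ⟨E1, hE1, I1⟩ := typing_sound h1
  obtain ⟨E2, hE2, I2⟩ := typing_sound h2
  have hwb : wb E1 E2 := wb_of_inv I1 I2 hc
  exact ⟨E1, E2, hE1, hE2, hwb, by simp [gsem, hE1, hE2, hwb]⟩

end Choreo
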